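/- Let H₁ and H₂ be finite-dimensional complex Hilbert spaces and let ϱ be a separable density operator on H₁ ⊗ H₂. Then ‖ϱ‖_γ ≤ 1, where ‖·‖_γ is the greatest cross norm associated with the trace norms. -/

import Mathlib

open scoped Kronecker ComplexOrder

/-- The trace norm `‖x‖₁ = tr((x* x)^{1/2})` of a matrix (operator on a
finite-dimensional complex Hilbert space). -/
noncomputable def traceNorm {n : Type*} [Fintype n] [DecidableEq n]
    (x : Matrix n n ℂ) : ℝ :=
  ((Matrix.posSemidef_conjTranspose_mul_self x).1.eigenvectorUnitary.1 *
      Matrix.diagonal ((fun r : ℝ => (r : ℂ)) ∘ (Real.sqrt ∘ (Matrix.posSemidef_conjTranspose_mul_self x).1.eigenvalues)) *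
      (star (Matrix.posSemidef_conjTranspose_mul_self x).1.eigenvectorUnitary : Matrix n n ℂ)).trace.re

/-- A density operator: positive semidefinite with trace one. -/
def IsDensityOp {n : Type*} [Fintype n] [DecidableEq n] (ρ : Matrix n n ℂ) : Prop :=
  ρ.PosSemidef ∧ ρ.trace = 1

/-- The greatest cross norm (projective norm) associated with the trace norms:
`‖t‖_γ = inf { ∑ ‖u i‖₁ ‖v i‖₁ : t = ∑ u i ⊗ v i }`, the infimum running over all
finite decompositions of `t` into elementary tensors. -/
noncomputable def crossNorm {m n : Type*} [Fintype m] [DecidableEq m]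
    [Fintype n] [DecidableEq n] (t : Matrix (m × n) (m × n) ℂ) : ℝ :=
  sInf { r : ℝ | ∃ (k : ℕ) (u : Fin k → Matrix m m ℂ) (v : Fin k → Matrix n n ℂ),
    t = ∑ i, u i ⊗ₖ v i ∧ r = ∑ i, traceNorm (u i) * traceNorm (v i) }

/-- Separability: `ϱ = ∑ i, ω i • ρ₁ i ⊗ ρ₂ i` with `ω i > 0` and `ρ₁ i`, `ρ₂ i`
density operators, the sum converging in trace norm. -/
def IsSeparableState {m n : Type*} [Fintype m] [DecidableEq m]
    [Fintype n] [DecidableEq n] (ϱ : Matrix (m × n) (m × n) ℂ) : Prop :=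
  ∃ (ω : ℕ → ℝ) (ρ₁ : ℕ → Matrix m m ℂ) (ρ₂ : ℕ → Matrix n n ℂ),
    (∀ i, 0 < ω i) ∧ (∀ i, IsDensityOp (ρ₁ i)) ∧ (∀ i, IsDensityOp (ρ₂ i)) ∧
    Filter.Tendsto
      (fun N => traceNorm (ϱ - ∑ i ∈ Finset.range N, (ω i : ℂ) • (ρ₁ i ⊗ₖ ρ₂ i)))
      Filter.atTop (nhds 0)


section Aux

open Matrix

variable {n : Type*} [Fintype n] [DecidableEq n]

open scoped MatrixOrder in
lemma traceNorm_eq_sqrt (x : Matrix n n ℂ) : traceNorm x = (CFC.sqrt (xᴴ * x)).trace.re := by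
  have hA := Matrix.posSemidef_conjTranspose_mul_self x
  rw [CFC.sqrt_eq_cfc, cfc_nnreal_eq_real _ (xᴴ * x), hA.1.cfc_eq, traceNorm]
  simp only [Matrix.IsHermitian.cfc, Unitary.conjStarAlgAut_apply]
  congr 5
  funext i
  simp [Real.coe_sqrt, hA.eigenvalues_nonneg i]

lemma diag_nonneg' {p : Matrix n n ℂ} (hp : p.PosSemidef) (i : n) : 0 ≤ (p i i).re := by
  have := hp.re_dotProduct_nonneg (Pi.single i 1)
  simpa [dotProduct, Pi.single_apply, Matrix.mulVec, Finset.sum_ite_eq] using this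

lemma re_trace_nonneg' {p : Matrix n n ℂ} (hp : p.PosSemidef) : 0 ≤ p.trace.re := by
  rw [Matrix.trace, Complex.re_sum]
  exact Finset.sum_nonneg fun i _ => diag_nonneg' hp i

open scoped MatrixOrder in
lemma traceNorm_nonneg (x : Matrix n n ℂ) : 0 ≤ traceNorm x := by
  rw [traceNorm_eq_sqrt]; exact re_trace_nonneg' (CFC.sqrt_nonneg _).posSemidef

open scoped MatrixOrder in
lemma traceNorm_of_posSemidef {p : Matrix n n ℂ} (hp : p.PosSemidef) :
    traceNorm p = p.trace.re := by
  have h : p = CFC.sqrt (pᴴ * p) := by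
    rw [hp.isHermitian.eq, ← pow_two, CFC.sqrt_sq p hp.nonneg]
  rw [traceNorm_eq_sqrt, ← h]

lemma trace_conj' {U D : Matrix n n ℂ} (hU : star U * U = 1) :
    (U * D * star U).trace = D.trace := by
  rw [Matrix.trace_mul_cycle, hU, Matrix.one_mul]

lemma trace_sq_le {p : Matrix n n ℂ} (hp : p.PosSemidef) :
    (p * p).trace.re ≤ p.trace.re ^ 2 := by
  have hU : star (hp.1.eigenvectorUnitary : Matrix n n ℂ) *
      (hp.1.eigenvectorUnitary : Matrix n n ℂ) = 1 :=
    Matrix.UnitaryGroup.star_mul_self _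
  set U : Matrix n n ℂ := (hp.1.eigenvectorUnitary : Matrix n n ℂ)
  set D : Matrix n n ℂ := Matrix.diagonal (RCLike.ofReal ∘ hp.1.eigenvalues)
  have hspec : p = U * D * star U := hp.1.spectral_theorem
  have hsq : p * p = U * (D * D) * star U := by
    rw [hspec]
    calc U * D * star U * (U * D * star U)
        = U * D * (star U * U) * (D * star U) := by noncomm_ring
    _ = U * (D * D) * star U := by rw [hU]; noncomm_ring
  have h1 : p.trace = D.trace := by rw [hspec, trace_conj' hU]
  have h2 : (p * p).trace = (D * D).trace := by rw [hsq, trace_conj' hU]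
  have hDD : D * D = Matrix.diagonal fun i => ((hp.1.eigenvalues i : ℂ)) ^ 2 := by
    rw [Matrix.diagonal_mul_diagonal]
    funext i
    simp [pow_two]
  rw [h1, h2, hDD, Matrix.trace_diagonal, Matrix.trace_diagonal]
  simp only [Complex.re_sum, Function.comp]
  have : ∀ i : n, ((((hp.1.eigenvalues i : ℂ)) ^ 2).re) = hp.1.eigenvalues i ^ 2 := by
    intro i; rw [← Complex.ofReal_pow, Complex.ofReal_re]
  simp only [this, Complex.ofReal_re]
  exact Finset.sum_sq_le_sq_sum_of_nonneg fun i _ => hp.eigenvalues_nonneg i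

lemma frob (x : Matrix n n ℂ) : (xᴴ * x).trace.re = ∑ a, ∑ b, ‖x b a‖ ^ 2 := by
  rw [Matrix.trace, Complex.re_sum]
  refine Finset.sum_congr rfl fun a _ => ?_
  rw [Matrix.diag_apply, Matrix.mul_apply, Complex.re_sum]
  refine Finset.sum_congr rfl fun b _ => ?_
  rw [Matrix.conjTranspose_apply]
  rw [Complex.sq_norm]
  simp only [Complex.star_def, Complex.mul_re, Complex.conj_re, Complex.conj_im,
    Complex.normSq_apply]
  ring

open scoped MatrixOrder in
lemma abs_entry_le_traceNorm (x : Matrix n n ℂ) (i j : n) :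
    ‖x i j‖ ≤ traceNorm x := by
  have hq := (CFC.sqrt_nonneg (xᴴ * x)).posSemidef
  have hsq : CFC.sqrt (xᴴ * x) * CFC.sqrt (xᴴ * x) = xᴴ * x :=
    CFC.sqrt_mul_sqrt_self _ (Matrix.posSemidef_conjTranspose_mul_self x).nonneg
  have h1 : ‖x i j‖ ^ 2 ≤ (xᴴ * x).trace.re := by
    rw [frob]
    have hb : ‖x i j‖ ^ 2 ≤ ∑ b, ‖x b j‖ ^ 2 :=
      Finset.single_le_sum (f := fun b => ‖x b j‖ ^ 2)
        (fun b _ => sq_nonneg _) (Finset.mem_univ i)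
    have ha : (∑ b, ‖x b j‖ ^ 2) ≤ ∑ a, ∑ b, ‖x b a‖ ^ 2 :=
      Finset.single_le_sum (f := fun a => ∑ b, ‖x b a‖ ^ 2)
        (fun a _ => Finset.sum_nonneg fun b _ => sq_nonneg _) (Finset.mem_univ j)
    exact hb.trans ha
  have h2 : (xᴴ * x).trace.re ≤ traceNorm x ^ 2 := by
    rw [← hsq, traceNorm_eq_sqrt]
    exact trace_sq_le hq
  nlinarith [traceNorm_nonneg x, norm_nonneg (x i j)]

lemma stdBasis_diag_posSemidef (b : n) {r : ℝ} (hr : 0 ≤ r) :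
    (Matrix.single b b (r : ℂ)).PosSemidef := by
  have : Matrix.single b b (r : ℂ) = Matrix.diagonal (Pi.single b (r : ℂ)) := by
    ext i j
    simp only [Matrix.single, Matrix.of_apply, Matrix.diagonal_apply, Pi.single_apply]
    by_cases h2 : i = j
    · subst h2; by_cases h1 : b = i <;> simp [h1, eq_comm]
    · simp [h2, fun h : b = i => h2 ∘ (h ▸ ·)]
      intro h1 h2'; exact absurd (h1.symm.trans h2') h2
  rw [this]
  refine Matrix.PosSemidef.diagonal ?_
  intro i
  simp only [Pi.single_apply]
  by_cases h : i = b <;> simp [h, Complex.zero_le_real.mpr hr]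

open scoped MatrixOrder in
lemma traceNorm_smul_stdBasis (c : ℂ) (a b : n) :
    traceNorm (c • Matrix.single a b (1 : ℂ)) = ‖c‖ := by
  set y := c • Matrix.single a b (1 : ℂ) with hy
  have hcc : yᴴ * y = Matrix.single b b ((‖c‖ : ℂ) * (‖c‖ : ℂ)) := by
    have hct : (Matrix.single a b (1 : ℂ))ᴴ = Matrix.single b a 1 := by
      ext i j
      simp only [Matrix.conjTranspose_apply, Matrix.single, Matrix.of_apply]
      by_cases h1 : a = j <;> by_cases h2 : b = i <;> simp [h1, h2]
    rw [hy, Matrix.conjTranspose_smul, hct]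
    rw [Matrix.smul_mul, Matrix.mul_smul, Matrix.single_mul_single_same, smul_smul]
    rw [Matrix.smul_single]
    congr 1
    simp only [smul_eq_mul, mul_one, Complex.star_def]
    rw [← Complex.normSq_eq_conj_mul_self]
    norm_cast
    rw [Complex.normSq_eq_norm_sq, sq]
  have hpsd := stdBasis_diag_posSemidef (n := n) b (norm_nonneg c)
  have hsq : (Matrix.single b b ((‖c‖ : ℂ))) ^ 2 = yᴴ * y := by
    rw [pow_two, Matrix.single_mul_single_same, hcc]
  have : Matrix.single b b (‖c‖ : ℂ) = CFC.sqrt (yᴴ * y) := by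
    rw [← hsq, CFC.sqrt_sq _ hpsd.nonneg]
  rw [traceNorm_eq_sqrt, ← this, Matrix.trace_single_eq_same, Complex.ofReal_re]

lemma posSemidef_real_smul {p : Matrix n n ℂ} (hp : p.PosSemidef) {r : ℝ} (hr : 0 ≤ r) :
    ((r : ℂ) • p).PosSemidef := by
  constructor
  · show ((r : ℂ) • p)ᴴ = _
    rw [Matrix.conjTranspose_smul]
    rw [hp.1.eq]
    congr 1
    simp [Complex.star_def]
  · intro x
    exact (hp.smul (Complex.zero_le_real.mpr hr)).2 x

variable {m : Type*} [Fintype m] [DecidableEq m]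

lemma stdBasis_kron (a b : m) (c d : n) :
    Matrix.single (a, c) (b, d) (1 : ℂ) =
      Matrix.single a b (1 : ℂ) ⊗ₖ Matrix.single c d (1 : ℂ) := by
  ext ⟨i, k⟩ ⟨j, l⟩
  simp only [Matrix.single, Matrix.of_apply, Matrix.kroneckerMap_apply, Prod.mk.injEq]
  by_cases h1 : a = i <;> by_cases h2 : b = j <;> by_cases h3 : c = k <;> by_cases h4 : d = l <;>
    simp [h1, h2, h3, h4]

lemma crossNorm_le {ι : Type*} [Fintype ι] (t : Matrix (m × n) (m × n) ℂ)
    (u : ι → Matrix m m ℂ) (v : ι → Matrix n n ℂ) (h : t = ∑ i, u i ⊗ₖ v i) :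
    crossNorm t ≤ ∑ i, traceNorm (u i) * traceNorm (v i) := by
  apply csInf_le
  · refine ⟨0, fun r hr => ?_⟩
    obtain ⟨k, u', v', -, rfl⟩ := hr
    exact Finset.sum_nonneg fun i _ => mul_nonneg (traceNorm_nonneg _) (traceNorm_nonneg _)
  · refine ⟨Fintype.card ι, u ∘ (Fintype.equivFin ι).symm, v ∘ (Fintype.equivFin ι).symm, ?_, ?_⟩
    · rw [h]
      exact Fintype.sum_equiv (Fintype.equivFin ι) _ _ fun i => by simp
    · exact Fintype.sum_equiv (Fintype.equivFin ι) _ _ fun i => by simp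

lemma traceNorm_densityOp {ρ : Matrix n n ℂ} (h : IsDensityOp ρ) : traceNorm ρ = 1 := by
  rw [traceNorm_of_posSemidef h.1, h.2, Complex.one_re]

end Aux

/-- A separable density operator `ϱ` on `H₁ ⊗ H₂` has greatest cross norm at most `1`. -/
theorem crossNorm_le_one_of_separable {m n : Type*} [Fintype m] [DecidableEq m]
    [Fintype n] [DecidableEq n] (ϱ : Matrix (m × n) (m × n) ℂ)
    (hϱ : IsDensityOp ϱ) (hsep : IsSeparableState ϱ) :
    crossNorm ϱ ≤ 1 := by
  obtain ⟨ω, ρ₁, ρ₂, hω, h1, h2, hconv⟩ := hsep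
  set D : ℝ := (Fintype.card (m × n) : ℝ) + (Fintype.card ((m × n) × (m × n)) : ℝ) with hD
  have key : ∀ N : ℕ, crossNorm ϱ ≤ 1 + D *
      traceNorm (ϱ - ∑ i ∈ Finset.range N, (ω i : ℂ) • (ρ₁ i ⊗ₖ ρ₂ i)) := by
    intro N
    set S : Matrix (m × n) (m × n) ℂ := ∑ i ∈ Finset.range N, (ω i : ℂ) • (ρ₁ i ⊗ₖ ρ₂ i) with hS
    set r : Matrix (m × n) (m × n) ℂ := ϱ - S with hr
    set u : (Fin N ⊕ ((m × n) × (m × n))) → Matrix m m ℂ :=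
      Sum.elim (fun i => (ω (i : ℕ) : ℂ) • ρ₁ (i : ℕ))
        (fun p => r p.1 p.2 • Matrix.single p.1.1 p.2.1 (1 : ℂ)) with hu
    set v : (Fin N ⊕ ((m × n) × (m × n))) → Matrix n n ℂ :=
      Sum.elim (fun i => ρ₂ (i : ℕ)) (fun p => Matrix.single p.1.2 p.2.2 (1 : ℂ)) with hv
    have hB : ∑ p : ((m × n) × (m × n)), u (.inr p) ⊗ₖ v (.inr p) = r := by
      have step : ∀ p : ((m × n) × (m × n)), u (.inr p) ⊗ₖ v (.inr p) =
          Matrix.single p.1 p.2 (r p.1 p.2) := by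
        rintro ⟨⟨a, c⟩, ⟨b, d⟩⟩
        simp only [hu, hv, Sum.elim_inr]
        rw [Matrix.smul_kronecker, ← stdBasis_kron, Matrix.smul_single, smul_eq_mul,
          mul_one]
      rw [Finset.sum_congr rfl fun p _ => step p]
      rw [Fintype.sum_prod_type]
      exact (Matrix.matrix_eq_sum_single r).symm
    have hA : ∑ i : Fin N, u (.inl i) ⊗ₖ v (.inl i) = S := by
      rw [hS, ← Fin.sum_univ_eq_sum_range]
      refine Finset.sum_congr rfl fun i _ => ?_
      simp only [hu, hv, Sum.elim_inl]
      rw [Matrix.smul_kronecker]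
    have hdecomp : ϱ = ∑ i, u i ⊗ₖ v i := by
      rw [Fintype.sum_sum_type, hA, hB, hr, add_sub_cancel]
    have hcost := crossNorm_le ϱ u v hdecomp
    rw [Fintype.sum_sum_type] at hcost
    have hAval : ∀ i : Fin N, traceNorm (u (.inl i)) * traceNorm (v (.inl i)) = ω (i : ℕ) := by
      intro i
      simp only [hu, hv, Sum.elim_inl]
      rw [traceNorm_densityOp (h2 (i : ℕ)), mul_one,
        traceNorm_of_posSemidef (posSemidef_real_smul (h1 (i : ℕ)).1 (hω (i : ℕ)).le),
        Matrix.trace_smul, smul_eq_mul, (h1 (i : ℕ)).2, mul_one, Complex.ofReal_re]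
    have hBval : ∀ p : ((m × n) × (m × n)), traceNorm (u (.inr p)) * traceNorm (v (.inr p)) =
        ‖r p.1 p.2‖ := by
      rintro ⟨⟨a, c⟩, ⟨b, d⟩⟩
      simp only [hu, hv, Sum.elim_inr]
      rw [traceNorm_smul_stdBasis]
      have : Matrix.single c d (1 : ℂ) = (1 : ℂ) • Matrix.single c d (1 : ℂ) := by
        rw [one_smul]
      rw [this, traceNorm_smul_stdBasis]
      simp
    rw [Finset.sum_congr rfl fun i _ => hAval i, Finset.sum_congr rfl fun p _ => hBval p] at hcost
    have htrS : S.trace = ((∑ i ∈ Finset.range N, ω i : ℝ) : ℂ) := by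
      rw [hS, Matrix.trace_sum]
      push_cast
      refine Finset.sum_congr rfl fun i _ => ?_
      rw [Matrix.trace_smul, Matrix.trace_kronecker, (h1 i).2, (h2 i).2, smul_eq_mul]
      ring
    have hsumA : ∑ i : Fin N, ω (i : ℕ) = 1 - r.trace.re := by
      have : r.trace = ϱ.trace - S.trace := Matrix.trace_sub ϱ S
      rw [this, hϱ.2, htrS] at *
      rw [Fin.sum_univ_eq_sum_range]
      simp [Complex.sub_re]
    have htrace_bound : |r.trace.re| ≤ (Fintype.card (m × n) : ℝ) * traceNorm r := by
      have h1' : |r.trace.re| ≤ ∑ p : m × n, ‖r p p‖ := by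
        rw [Matrix.trace]
        calc |(∑ p, r.diag p).re| ≤ ‖∑ p, r.diag p‖ := Complex.abs_re_le_norm _
        _ ≤ ∑ p, ‖r.diag p‖ := by
            simpa using norm_sum_le Finset.univ r.diag
        _ = ∑ p : m × n, ‖r p p‖ := rfl
      refine h1'.trans ?_
      calc ∑ p : m × n, ‖r p p‖ ≤ ∑ _p : m × n, traceNorm r :=
        Finset.sum_le_sum fun p _ => abs_entry_le_traceNorm r p p
      _ = (Fintype.card (m × n) : ℝ) * traceNorm r := by
          rw [Finset.sum_const, Finset.card_univ, nsmul_eq_mul]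
    have hBbound : ∑ p : ((m × n) × (m × n)), ‖r p.1 p.2‖ ≤
        (Fintype.card ((m × n) × (m × n)) : ℝ) * traceNorm r := by
      calc ∑ p : ((m × n) × (m × n)), ‖r p.1 p.2‖ ≤
          ∑ _p : ((m × n) × (m × n)), traceNorm r :=
        Finset.sum_le_sum fun p _ => abs_entry_le_traceNorm r p.1 p.2
      _ = _ := by rw [Finset.sum_const, Finset.card_univ, nsmul_eq_mul]
    have hmid : crossNorm ϱ ≤ (1 - r.trace.re) +
        (Fintype.card ((m × n) × (m × n)) : ℝ) * traceNorm r := by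
      calc crossNorm ϱ ≤ _ := hcost
      _ ≤ (1 - r.trace.re) + (Fintype.card ((m × n) × (m × n)) : ℝ) * traceNorm r := by
          rw [hsumA]
          exact add_le_add le_rfl hBbound
    refine hmid.trans ?_
    have hre : 1 - r.trace.re ≤ 1 + (Fintype.card (m × n) : ℝ) * traceNorm r := by
      have := (abs_le.mp htrace_bound).1
      linarith
    rw [hD]
    ring_nf
    nlinarith [hre]
  have hlim : Filter.Tendsto
      (fun N => 1 + D * traceNorm (ϱ - ∑ i ∈ Finset.range N, (ω i : ℂ) • (ρ₁ i ⊗ₖ ρ₂ i)))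
      Filter.atTop (nhds 1) := by
    have := (hconv.const_mul D).const_add (1 : ℝ)
    simpa using this
  exact ge_of_tendsto hlim (Filter.Eventually.of_forall key)
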